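/- Let α > 0, ρ > 0, let s be a complex number with Re(s)/ρ + α < 1, and let f : (0,∞) → ℂ be such that t ↦ t^{Re(s) + αρ - 1} f(t) is integrable on (0,∞) and the Mellin transform of the function x ↦ (ρI^α_{0+} f)(x) exists at s. Then the Mellin transform of the generalized fractional integral satisfies M[ρI^α_{0+} f](s) = [Γ(1 - s/ρ - α) / (Γ(1 - s/ρ) ρ^α)] · M[f](s + αρ). -/

import Mathlib

open MeasureTheory Filter Real Complex

open Set

/-- The generalized (Katugampola) left-sided fractional integral of order `α`
with parameter `ρ` and base point `0`, for a complex-valued function `f`. -/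
noncomputable def genFracIntegral (ρ α : ℝ) (f : ℝ → ℂ) (x : ℝ) : ℂ :=
  (ρ ^ (1 - α) / Real.Gamma α) •
    ∫ τ in (0 : ℝ)..x, (τ ^ (ρ - 1) * (x ^ ρ - τ ^ ρ) ^ (α - 1)) • f τ

lemma betaAux_integrand_eq {ρ : ℝ} (hρ : 0 < ρ) (a : ℂ) (α : ℝ) {u : ℝ} (hu : u ∈ Ioo (0:ℝ) 1) :
    u ^ (ρ - 1) • ((((u ^ ρ : ℝ)) : ℂ) ^ (a - 1) * ((((1 - u ^ ρ) ^ (α - 1) : ℝ)) : ℂ))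
      = (u : ℂ) ^ ((ρ : ℂ) * a - 1) * ((((1 - u ^ ρ) ^ (α - 1) : ℝ)) : ℂ) := by
  have hu0 : (0:ℝ) < u := hu.1
  have huC : (u : ℂ) ≠ 0 := Complex.ofReal_ne_zero.mpr hu0.ne'
  rw [← Complex.cpow_mul_ofReal_nonneg hu0.le ρ (a - 1), Complex.real_smul,
    Complex.ofReal_cpow hu0.le, ← mul_assoc, ← Complex.cpow_add _ _ huC]
  congr 2
  push_cast
  ring

lemma betaAux {ρ α : ℝ} (hρ : 0 < ρ) (hα : 0 < α) {a : ℂ} (ha : 0 < a.re) :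
    IntegrableOn (fun u : ℝ => (u : ℂ) ^ ((ρ : ℂ) * a - 1) * ((((1 - u ^ ρ) ^ (α - 1) : ℝ)) : ℂ))
      (Ioo (0:ℝ) 1) ∧
    ∫ u in Ioo (0:ℝ) 1, (u : ℂ) ^ ((ρ : ℂ) * a - 1) * ((((1 - u ^ ρ) ^ (α - 1) : ℝ)) : ℂ)
      = (ρ : ℂ)⁻¹ * Complex.betaIntegral a (α : ℂ) := by
  set ψ : ℝ → ℂ := fun w => (w : ℂ) ^ (a - 1) * ((((1 - w) ^ (α - 1) : ℝ)) : ℂ) with hψ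
  set Φ : ℝ → ℂ := (Ioo (0:ℝ) 1).indicator ψ with hΦ
  have hβeq : ∀ w ∈ Ioo (0:ℝ) 1,
      (w : ℂ) ^ (a - 1) * (1 - (w : ℂ)) ^ ((α : ℂ) - 1) = ψ w := by
    intro w hw
    have h1w : (0:ℝ) ≤ 1 - w := by linarith [hw.2]
    rw [hψ]
    congr 1
    rw [Complex.ofReal_cpow h1w]
    push_cast
    ring_nf
  have hβint : IntegrableOn ψ (Ioo (0:ℝ) 1) := by
    have h := Complex.betaIntegral_convergent ha (by simpa using hα : 0 < Complex.re (α : ℂ))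
    have h2 := (intervalIntegrable_iff_integrableOn_Ioc_of_le zero_le_one).mp h
    exact (h2.mono_set Ioo_subset_Ioc_self).congr_fun hβeq measurableSet_Ioo
  have hΦint : IntegrableOn Φ (Ioi (0:ℝ)) := by
    have : Integrable Φ := (integrable_indicator_iff measurableSet_Ioo).mpr hβint
    exact this.integrableOn
  have hmem : ∀ u : ℝ, u ∈ Ioo (0:ℝ) 1 → u ^ ρ ∈ Ioo (0:ℝ) 1 := fun u hu =>
    ⟨Real.rpow_pos_of_pos hu.1 _, Real.rpow_lt_one hu.1.le hu.2 hρ⟩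
  have hmem' : ∀ u : ℝ, u ∈ Ioi (0:ℝ) → u ∉ Ioo (0:ℝ) 1 → u ^ ρ ∉ Ioo (0:ℝ) 1 := by
    intro u hu h
    have h1 : (1:ℝ) ≤ u := by
      by_contra h'
      exact h ⟨hu, not_le.mp h'⟩
    intro hc
    exact absurd hc.2 (not_lt.mpr (Real.one_le_rpow h1 hρ.le))
  constructor
  · have h0 := (integrableOn_Ioi_comp_rpow_iff' Φ hρ.ne').mpr hΦint
    refine ((h0.mono_set Ioo_subset_Ioi_self).congr_fun ?_ measurableSet_Ioo)
    intro u hu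
    simp only [hΦ, indicator_of_mem (hmem u hu)]
    exact betaAux_integrand_eq hρ a α hu
  · have h0 := integral_comp_rpow_Ioi Φ hρ.ne'
    have e1 : ∀ x ∈ Ioi (0:ℝ), (|ρ| * x ^ (ρ - 1)) • Φ (x ^ ρ)
        = ρ • ((Ioo (0:ℝ) 1).indicator
            (fun u => (u : ℂ) ^ ((ρ : ℂ) * a - 1) * ((((1 - u ^ ρ) ^ (α - 1) : ℝ)) : ℂ)) x) := by
      intro x hx
      rcases Classical.em (x ∈ Ioo (0:ℝ) 1) with h | h
      · rw [indicator_of_mem h, hΦ, indicator_of_mem (hmem x h), abs_of_pos hρ, mul_smul,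
          ← betaAux_integrand_eq hρ a α h]
      · rw [indicator_of_notMem h, hΦ, indicator_of_notMem (hmem' x hx h), smul_zero, smul_zero]
    rw [setIntegral_congr_fun measurableSet_Ioi e1, integral_smul] at h0
    have h2 : ∫ x in Ioi (0:ℝ), (Ioo (0:ℝ) 1).indicator
        (fun u => (u : ℂ) ^ ((ρ : ℂ) * a - 1) * ((((1 - u ^ ρ) ^ (α - 1) : ℝ)) : ℂ)) x
        = ∫ u in Ioo (0:ℝ) 1, (u : ℂ) ^ ((ρ : ℂ) * a - 1) * ((((1 - u ^ ρ) ^ (α - 1) : ℝ)) : ℂ) := by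
      rw [setIntegral_indicator measurableSet_Ioo]
      congr 1
      rw [Set.inter_eq_right.mpr Ioo_subset_Ioi_self]
    have h3 : ∫ y in Ioi (0:ℝ), Φ y = Complex.betaIntegral a (α : ℂ) := by
      rw [hΦ, setIntegral_indicator measurableSet_Ioo,
        Set.inter_eq_right.mpr Ioo_subset_Ioi_self, Complex.betaIntegral,
        intervalIntegral.integral_of_le zero_le_one, integral_Ioc_eq_integral_Ioo]
      exact (setIntegral_congr_fun measurableSet_Ioo hβeq).symm
    rw [h2, h3] at h0
    rw [← h0, Complex.real_smul, ← mul_assoc,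
      inv_mul_cancel₀ (Complex.ofReal_ne_zero.mpr hρ.ne'), one_mul]

/-- Pointwise rewriting of the Mellin integrand of the fractional integral. -/
lemma genFrac_mellin_integrand {ρ α : ℝ} (hρ : 0 < ρ) (g : ℝ → ℂ) {x : ℝ} (hx : 0 < x) (s : ℂ) :
    (x : ℂ) ^ (s - 1) • genFracIntegral ρ α g x
      = (ρ ^ (1 - α) / Real.Gamma α) •
        ∫ u in Ioo (0:ℝ) 1, ((u ^ (ρ - 1) * (1 - u ^ ρ) ^ (α - 1) : ℝ) : ℂ)
          * ((x : ℂ) ^ (s + (α : ℂ) * (ρ : ℂ) - 1) * g (u * x)) := by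
  rw [genFracIntegral, smul_comm]
  congr 1
  have hJ : (∫ τ in (0:ℝ)..x, (τ ^ (ρ - 1) * (x ^ ρ - τ ^ ρ) ^ (α - 1)) • g τ)
      = x • ∫ u in (0:ℝ)..1, ((u * x) ^ (ρ - 1) * (x ^ ρ - (u * x) ^ ρ) ^ (α - 1)) • g (u * x) := by
    have h := intervalIntegral.smul_integral_comp_mul_right (a := (0:ℝ)) (b := (1:ℝ))
      (fun τ => (τ ^ (ρ - 1) * (x ^ ρ - τ ^ ρ) ^ (α - 1)) • g τ) x
    simp only [zero_mul, one_mul] at h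
    exact h.symm
  rw [hJ, intervalIntegral.integral_of_le zero_le_one, integral_Ioc_eq_integral_Ioo]
  have hpt : ∀ u ∈ Ioo (0:ℝ) 1,
      ((u * x) ^ (ρ - 1) * (x ^ ρ - (u * x) ^ ρ) ^ (α - 1)) • g (u * x)
        = (x ^ (ρ * α - 1)) • ((u ^ (ρ - 1) * (1 - u ^ ρ) ^ (α - 1)) • g (u * x)) := by
    intro u hu
    have h1 : (u * x) ^ (ρ - 1) = u ^ (ρ - 1) * x ^ (ρ - 1) := Real.mul_rpow hu.1.le hx.le
    have h2 : x ^ ρ - (u * x) ^ ρ = (1 - u ^ ρ) * x ^ ρ := by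
      rw [Real.mul_rpow hu.1.le hx.le]; ring
    have h3 : ((1 - u ^ ρ) * x ^ ρ) ^ (α - 1) = (1 - u ^ ρ) ^ (α - 1) * (x ^ ρ) ^ (α - 1) :=
      Real.mul_rpow (sub_nonneg.mpr (Real.rpow_le_one hu.1.le hu.2.le hρ.le))
        (Real.rpow_nonneg hx.le _)
    have h4 : (x ^ ρ) ^ (α - 1) = x ^ (ρ * (α - 1)) := (Real.rpow_mul hx.le ρ (α - 1)).symm
    have h5 : x ^ (ρ - 1) * x ^ (ρ * (α - 1)) = x ^ (ρ * α - 1) := by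
      rw [← Real.rpow_add hx]; ring_nf
    rw [h1, h2, h3, h4, smul_smul]
    congr 1
    rw [← h5]; ring
  rw [setIntegral_congr_fun measurableSet_Ioo hpt, integral_smul, smul_smul, ← integral_smul]
  have hxx : x * x ^ (ρ * α - 1) = x ^ (ρ * α) := by
    nth_rewrite 1 [← Real.rpow_one x]
    rw [← Real.rpow_add hx]; ring_nf
  rw [hxx, ← integral_smul]
  refine setIntegral_congr_fun measurableSet_Ioo (fun u hu => ?_)
  have hxC : (x : ℂ) ≠ 0 := Complex.ofReal_ne_zero.mpr hx.ne'
  have hcp : (x : ℂ) ^ (s - 1) * (x : ℂ) ^ ((ρ : ℂ) * (α : ℂ))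
      = (x : ℂ) ^ (s + (α : ℂ) * (ρ : ℂ) - 1) := by
    rw [← Complex.cpow_add _ _ hxC]
    congr 1
    push_cast
    ring
  simp only [Complex.real_smul, smul_eq_mul, Complex.ofReal_cpow hx.le, Complex.ofReal_mul]
  linear_combination (Complex.ofReal (u ^ (ρ - 1)) * Complex.ofReal ((1 - u ^ ρ) ^ (α - 1))
    * g (u * x)) * hcp

/-- For `α > 0`, `ρ > 0` and `s : ℂ` with `Re(s)/ρ + α < 1`, if
`t ↦ t^{Re(s)+αρ-1} f(t)` is integrable on `(0,∞)` and the Mellin transform of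
`ρI^α_{0+} f` exists at `s`, then
`M[ρI^α_{0+} f](s) = [Γ(1 - s/ρ - α)/(Γ(1 - s/ρ) ρ^α)] M[f](s + αρ)`. -/
theorem mellin_genFracIntegral (α ρ : ℝ) (s : ℂ) (hα : 0 < α) (hρ : 0 < ρ)
    (hs : s.re / ρ + α < 1) (f : ℝ → ℂ)
    (hf : IntegrableOn (fun t : ℝ => t ^ (s.re + α * ρ - 1) • f t) (Set.Ioi 0))
    (hM : MellinConvergent (genFracIntegral ρ α f) s) :
    mellin (genFracIntegral ρ α f) s =
      (Complex.Gamma (1 - s / ρ - α) / (Complex.Gamma (1 - s / ρ) * (ρ : ℂ) ^ (α : ℂ))) *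
        mellin f (s + (α : ℂ) * (ρ : ℂ)) := by
  classical
  have hρC : (ρ : ℂ) ≠ 0 := Complex.ofReal_ne_zero.mpr hρ.ne'
  set z : ℂ := s + (α : ℂ) * (ρ : ℂ) with hzdef
  set c : ℝ := s.re + α * ρ - 1 with hcdef
  have hzre : (z - 1).re = c := by
    simp [hzdef, hcdef, Complex.add_re, Complex.sub_re, Complex.mul_re]
  set a : ℂ := 1 - s / ρ - α with hadef
  have hareq : a.re = 1 - s.re / ρ - α := by
    simp [hadef, Complex.sub_re, Complex.one_re, Complex.div_ofReal_re]
  have hare : 0 < a.re := by rw [hareq]; linarith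
  set μ : Measure ℝ := volume.restrict (Ioi (0:ℝ)) with hμ
  set ν : Measure ℝ := volume.restrict (Ioo (0:ℝ) 1) with hν
  obtain hsm := hf.aestronglyMeasurable
  set g : ℝ → ℂ := fun t => t ^ (-c) • (hsm.mk _) t with hg
  have hgsm : StronglyMeasurable g :=
    ((measurable_id.pow measurable_const).stronglyMeasurable).smul hsm.stronglyMeasurable_mk
  have hfg : f =ᵐ[μ] g := by
    filter_upwards [hsm.ae_eq_mk, self_mem_ae_restrict measurableSet_Ioi] with t h1 h2
    have ht : (0:ℝ) < t := h2
    rw [hg]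
    dsimp only
    rw [← h1, smul_smul, ← Real.rpow_add ht, neg_add_cancel, Real.rpow_zero, one_smul]
  have hgc : IntegrableOn (fun t => t ^ c • g t) (Ioi (0:ℝ)) := by
    refine hf.congr ?_
    filter_upwards [hfg] with t ht
    rw [ht]
  have hzc : ∀ t : ℝ, 0 < t → ‖t ^ c • g t‖ = ‖(t : ℂ) ^ (z - 1) * g t‖ := by
    intro t ht
    have h1 : ‖(t:ℂ) ^ (z - 1)‖ = t ^ c := by
      rw [Complex.norm_cpow_eq_rpow_re_of_pos ht, hzre]
    have h2 : ‖t ^ c‖ = t ^ c := by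
      rw [Real.norm_eq_abs, _root_.abs_of_nonneg (Real.rpow_nonneg ht.le c)]
    rw [norm_mul, norm_smul, h1, h2]
  have hgz : IntegrableOn (fun t : ℝ => (t : ℂ) ^ (z - 1) * g t) (Ioi (0:ℝ)) := by
    constructor
    · exact (((Complex.measurable_ofReal.pow measurable_const)).mul
        hgsm.measurable).aestronglyMeasurable
    · refine hgc.hasFiniteIntegral.congr' ?_
      filter_upwards [self_mem_ae_restrict measurableSet_Ioi] with t ht
      exact hzc t ht
  set H : ℝ → ℂ := fun t => (t : ℂ) ^ (z - 1) * g t with hH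
  set Kr : ℝ → ℝ := fun u => u ^ (ρ - 1) * (1 - u ^ ρ) ^ (α - 1) with hKr
  have hKrm : Measurable Kr := ((measurable_id.pow measurable_const).mul
      ((measurable_const.sub (measurable_id.pow measurable_const)).pow measurable_const))
  set Q : ℝ → ℝ → ℂ := fun u x => ((Kr u : ℝ) : ℂ) * ((x : ℂ) ^ (z - 1) * g (u * x)) with hQ
  have hQm : AEStronglyMeasurable (Function.uncurry Q) (ν.prod μ) := by
    refine Measurable.aestronglyMeasurable ?_
    exact ((Complex.measurable_ofReal.comp (hKrm.comp measurable_fst)).mul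
      (((Complex.measurable_ofReal.comp measurable_snd).pow measurable_const).mul
        (hgsm.measurable.comp (measurable_fst.mul measurable_snd))))
  have hKrnn : ∀ u ∈ Ioo (0:ℝ) 1, 0 ≤ Kr u := fun u hu =>
    mul_nonneg (Real.rpow_nonneg hu.1.le _)
      (Real.rpow_nonneg (sub_nonneg.mpr (Real.rpow_le_one hu.1.le hu.2.le hρ.le)) _)
  have hHsec : ∀ u : ℝ, 0 < u → IntegrableOn (fun x => H (u * x)) (Ioi (0:ℝ)) := by
    intro u hu
    have h := (integrableOn_Ioi_comp_mul_left_iff H 0 hu).mpr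
    simpa [mul_zero] using h (by simpa [mul_zero] using hgz)
  have hcpow_split : ∀ u x : ℝ, 0 < u → 0 < x →
      (x : ℂ) ^ (z - 1) * g (u * x) = (u : ℂ) ^ (1 - z) * H (u * x) := by
    intro u x hu hx
    have hux : ((u * x : ℝ) : ℂ) ^ (z - 1) = (u : ℂ) ^ (z - 1) * (x : ℂ) ^ (z - 1) := by
      push_cast
      exact Complex.mul_cpow_ofReal_nonneg hu.le hx.le _
    have hone : (u : ℂ) ^ (1 - z) * (u : ℂ) ^ (z - 1) = 1 := by
      rw [← Complex.cpow_add _ _ (Complex.ofReal_ne_zero.mpr hu.ne')]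
      norm_num
    rw [hH]
    dsimp only
    rw [hux]
    linear_combination (-((x:ℂ) ^ (z - 1) * g (u * x))) * hone
  have hsec : ∀ u ∈ Ioo (0:ℝ) 1, Integrable (fun x => Q u x) μ := by
    intro u hu
    refine ((((hHsec u hu.1).const_mul ((u:ℂ) ^ (1 - z))).const_mul
      (((Kr u : ℝ) : ℂ))).congr ?_)
    filter_upwards [self_mem_ae_restrict measurableSet_Ioi] with x hx
    rw [hQ]
    dsimp only
    rw [hcpow_split u x hu.1 hx]
  set Kg : ℝ := ∫ t in Ioi (0:ℝ), ‖H t‖ with hKg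
  have hnorm : ∀ u ∈ Ioo (0:ℝ) 1, (∫ x, ‖Q u x‖ ∂μ) = (Kr u * u ^ (-(c+1))) * Kg := by
    intro u hu
    have hu0 : (0:ℝ) < u := hu.1
    have e1 : ∀ x ∈ Ioi (0:ℝ), ‖Q u x‖ = (Kr u * u ^ (-c)) * ‖H (u * x)‖ := by
      intro x hx
      have hx0 : (0:ℝ) < x := hx
      have hux : (0:ℝ) < u * x := mul_pos hu0 hx0
      rw [hQ, hH]
      dsimp only
      push_cast
      rw [norm_mul, norm_mul, norm_mul,
        Complex.norm_cpow_eq_rpow_re_of_pos hx0,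
        show ((u:ℝ):ℂ) * ((x:ℝ):ℂ) = ((u*x : ℝ) : ℂ) from by push_cast; ring,
        Complex.norm_cpow_eq_rpow_re_of_pos hux, hzre, Complex.norm_real,
        Real.norm_eq_abs, _root_.abs_of_nonneg (hKrnn u hu),
        Real.mul_rpow hu0.le hx0.le]
      have : u ^ (-c) * u ^ c = 1 := by
        rw [← Real.rpow_add hu0, neg_add_cancel, Real.rpow_zero]
      linear_combination (-(Kr u * (x ^ c) * ‖g (u * x)‖)) * this
    calc ∫ x, ‖Q u x‖ ∂μ
        = ∫ x in Ioi (0:ℝ), (Kr u * u ^ (-c)) * ‖H (u * x)‖ :=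
          setIntegral_congr_fun measurableSet_Ioi e1
      _ = (Kr u * u ^ (-c)) * ∫ x in Ioi (0:ℝ), ‖H (u * x)‖ := by
          rw [integral_const_mul]
      _ = (Kr u * u ^ (-c)) * (u⁻¹ * Kg) := by
          have h3 := integral_comp_mul_left_Ioi (fun t => ‖H t‖) 0 hu0
          simp only [mul_zero, smul_eq_mul] at h3
          rw [h3]
      _ = (Kr u * u ^ (-(c+1))) * Kg := by
          have : u ^ (-(c+1)) = u ^ (-c) * u⁻¹ := by
            rw [← Real.rpow_neg_one u, ← Real.rpow_add hu0]
            ring_nf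
          rw [this]
          ring
  have hbeta := betaAux (a := a) hρ hα hare
  have hbre : ∀ u ∈ Ioo (0:ℝ) 1,
      ‖(u:ℂ) ^ ((ρ:ℂ) * a - 1) * ((((1 - u ^ ρ) ^ (α - 1) : ℝ)) : ℂ)‖
        = Kr u * u ^ (-(c+1)) := by
    intro u hu
    have hu0 : (0:ℝ) < u := hu.1
    have hnn : (0:ℝ) ≤ (1 - u ^ ρ) ^ (α - 1) :=
      Real.rpow_nonneg (sub_nonneg.mpr (Real.rpow_le_one hu0.le hu.2.le hρ.le)) _
    rw [norm_mul, Complex.norm_cpow_eq_rpow_re_of_pos hu0,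
      Complex.norm_real, Real.norm_eq_abs, _root_.abs_of_nonneg hnn]
    have hre : ((ρ:ℂ) * a - 1).re = ρ * a.re - 1 := by
      simp [Complex.sub_re, Complex.mul_re]
    have hexp : ρ * a.re - 1 = (ρ - 1) + (-(c+1)) := by
      rw [hareq, hcdef]
      field_simp
      ring
    rw [hre, hexp, Real.rpow_add hu0, hKr]
    ring
  have houter : Integrable (fun u => ∫ x, ‖Q u x‖ ∂μ) ν := by
    refine (hbeta.1.norm.mul_const Kg).congr ?_
    filter_upwards [self_mem_ae_restrict measurableSet_Ioo] with u hu
    rw [hnorm u hu, hbre u hu]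
  have hQint : Integrable (Function.uncurry Q) (ν.prod μ) := by
    refine (integrable_prod_iff hQm).mpr ⟨?_, ?_⟩
    · filter_upwards [self_mem_ae_restrict measurableSet_Ioo] with u hu
      exact hsec u hu
    · exact houter
  have hswap := integral_integral_swap hQint
  -- identification of inner integrals
  have hmel : ∫ t in Ioi (0:ℝ), H t = mellin g z := by
    rw [mellin]
    simp only [hH, smul_eq_mul]
  have e2 : ∀ u ∈ Ioo (0:ℝ) 1, (∫ x, Q u x ∂μ)
      = ((u:ℂ) ^ ((ρ:ℂ) * a - 1) * ((((1 - u ^ ρ) ^ (α - 1) : ℝ)) : ℂ)) * mellin g z := by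
    intro u hu
    have hu0 : (0:ℝ) < u := hu.1
    have huC : (u:ℂ) ≠ 0 := Complex.ofReal_ne_zero.mpr hu0.ne'
    have h2 : ∀ x ∈ Ioi (0:ℝ), Q u x = (((Kr u : ℝ):ℂ) * (u:ℂ) ^ (1 - z)) * H (u * x) := by
      intro x hx
      rw [hQ]
      dsimp only
      rw [hcpow_split u x hu0 hx]
      ring
    rw [setIntegral_congr_fun measurableSet_Ioi h2, integral_const_mul]
    have h3 := integral_comp_mul_left_Ioi H 0 hu0
    simp only [mul_zero] at h3
    rw [h3, hmel]
    have hKsplit : ((Kr u : ℝ) : ℂ)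
        = (u:ℂ) ^ (((ρ - 1 : ℝ)) : ℂ) * ((((1 - u ^ ρ) ^ (α - 1) : ℝ)) : ℂ) := by
      show ((u ^ (ρ - 1) * (1 - u ^ ρ) ^ (α - 1) : ℝ) : ℂ) = _
      rw [Complex.ofReal_mul, Complex.ofReal_cpow hu0.le]
    have hexp : (u:ℂ) ^ (((ρ - 1 : ℝ)) : ℂ) * ((u:ℂ) ^ (1 - z) * (u:ℂ)⁻¹)
        = (u:ℂ) ^ ((ρ:ℂ) * a - 1) := by
      rw [← Complex.cpow_neg_one (u:ℂ), ← Complex.cpow_add _ _ huC,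
        ← Complex.cpow_add _ _ huC]
      congr 1
      rw [hadef, hzdef]
      push_cast
      field_simp
      ring
    rw [Complex.real_smul, Complex.ofReal_inv, hKsplit]
    linear_combination (((((1 - u ^ ρ) ^ (α - 1) : ℝ)) : ℂ) * mellin g z) * hexp
  -- put everything together
  have hmain : mellin (genFracIntegral ρ α g) s
      = (ρ ^ (1 - α) / Real.Gamma α) •
        (((ρ:ℂ)⁻¹ * Complex.betaIntegral a (α:ℂ)) * mellin g z) := by
    rw [mellin]
    have e1 : ∀ x ∈ Ioi (0:ℝ), (x:ℂ) ^ (s - 1) • genFracIntegral ρ α g x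
        = (ρ ^ (1 - α) / Real.Gamma α) • ∫ u in Ioo (0:ℝ) 1, Q u x := by
      intro x hx
      rw [genFrac_mellin_integrand hρ g hx s]
    rw [setIntegral_congr_fun measurableSet_Ioi e1, integral_smul]
    congr 1
    rw [show (∫ x, (∫ u in Ioo (0:ℝ) 1, Q u x) ∂μ) = ∫ u, ∫ x, Q u x ∂μ ∂ν from hswap.symm,
      setIntegral_congr_fun measurableSet_Ioo e2, integral_mul_const, hbeta.2]
  -- transfer from g back to f
  have hmf : mellin (genFracIntegral ρ α f) s = mellin (genFracIntegral ρ α g) s := by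
    have hae : ∀ᵐ t : ℝ, t ∈ Ioi (0:ℝ) → f t = g t :=
      (ae_restrict_iff' measurableSet_Ioi).mp hfg
    rw [mellin, mellin]
    refine setIntegral_congr_fun measurableSet_Ioi (fun x hx => ?_)
    have hx0 : (0:ℝ) < x := hx
    congr 1
    rw [genFracIntegral, genFracIntegral]
    congr 1
    refine intervalIntegral.integral_congr_ae ?_
    filter_upwards [hae] with t ht h2
    have h3 : t ∈ Ioc (0:ℝ) x := by rwa [Set.uIoc_of_le hx0.le] at h2
    rw [ht h3.1]
  have hmz : mellin f z = mellin g z := by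
    rw [mellin, mellin]
    refine integral_congr_ae ?_
    filter_upwards [hfg] with t ht
    rw [ht]
  rw [hmf, hmain, hmz]
  -- final Gamma algebra
  have hGd : Complex.Gamma (1 - s / ρ) ≠ 0 := by
    refine Complex.Gamma_ne_zero_of_re_pos ?_
    have h1 : (1 - s / (ρ:ℂ)).re = 1 - s.re / ρ := by
      simp [Complex.sub_re, Complex.one_re, Complex.div_ofReal_re]
    rw [h1]
    linarith
  have hGa : Complex.betaIntegral a (α:ℂ)
      = Complex.Gamma a * Complex.Gamma (α:ℂ) / Complex.Gamma (1 - s / ρ) := by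
    have h := Complex.Gamma_mul_Gamma_eq_betaIntegral hare
      (by simpa using hα : 0 < Complex.re ((α:ℝ):ℂ))
    have hsum : a + (α:ℂ) = 1 - s / ρ := by rw [hadef]; ring
    rw [hsum] at h
    rw [eq_div_iff hGd, h, mul_comm]
  have hGα : Complex.Gamma ((α:ℝ):ℂ) ≠ 0 :=
    Complex.Gamma_ne_zero_of_re_pos (by simpa using hα)
  have hRΓ : ((Real.Gamma α : ℝ) : ℂ) = Complex.Gamma ((α:ℝ):ℂ) := (Complex.Gamma_ofReal α).symm
  have hpow : (ρ:ℂ) ^ (((1 - α : ℝ)):ℂ) * (ρ:ℂ) ^ ((α:ℝ):ℂ) = (ρ:ℂ) := by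
    rw [← Complex.cpow_add _ _ hρC]
    rw [show (((1 - α : ℝ)):ℂ) + ((α:ℝ):ℂ) = 1 from by push_cast; ring]
    exact Complex.cpow_one _
  have hpow0 : (ρ:ℂ) ^ ((α:ℝ):ℂ) ≠ 0 := by
    intro h
    rw [Complex.cpow_eq_zero_iff] at h
    exact hρC h.1
  rw [hGa, Complex.real_smul, Complex.ofReal_div, Complex.ofReal_cpow hρ.le, hRΓ]
  set M := mellin g z with hM1
  set A := Complex.Gamma a with hA1
  set D := Complex.Gamma (1 - s / (ρ:ℂ)) with hD1
  set G := Complex.Gamma ((α:ℝ):ℂ) with hG1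
  set p := (ρ:ℂ) ^ (((1 - α : ℝ)):ℂ) with hp1
  set q := (ρ:ℂ) ^ ((α:ℝ):ℂ) with hq1
  field_simp
  linear_combination (A * M) * hpow
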